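/- arXiv:1702.05302 — 2 statements merged into one kernel-verified Lean document; each statement's English description precedes it below -/
import Mathlib

section
/- For the Rankine vortex in the plane, let W(t,x) = (K_{μt} ⋆ 1_D)(x) − 1_D(x), where K_s(x) = (1/(4πs)) e^{−|x|²/(4s)} is the 2D heat kernel and D is the unit disc. Then there exists a constant C₁ > 0 (independent of μ and t) such that for all μ, t > 0 with μt ≤ 1 and all p ∈ [2,∞), the L^p(ℝ²) norm of W(t,·) is at least C₁ (μt)^{1/(2p)}. -/
open MeasureTheory Real

noncomputable section

abbrev Plane := EuclideanSpace ℝ (Fin 2)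

/-- The 2D heat kernel at time `s`. -/
def heatKernel (s : ℝ) (x : Plane) : ℝ := (1 / (4 * π * s)) * Real.exp (-‖x‖ ^ 2 / (4 * s))

/-- Indicator function of the closed unit disc `D ⊆ ℝ²`. -/
def discInd (x : Plane) : ℝ := (Metric.closedBall (0 : Plane) 1).indicator 1 x

/-- `W(t,x) = (K_{μt} ⋆ 1_D)(x) − 1_D(x)`. -/
def Wfun (μ t : ℝ) (x : Plane) : ℝ :=
  (∫ y : Plane, heatKernel (μ * t) (x - y) * discInd y) - discInd x

lemma volume_closedBall_plane (z : Plane) (r : ℝ) (hr : 0 ≤ r) :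
    volume (Metric.closedBall z r) = ENNReal.ofReal (π * r ^ 2) := by
  rw [EuclideanSpace.volume_closedBall]
  have h2 : (Fintype.card (Fin 2) : ℝ) = 2 := by simp
  rw [Fintype.card_fin]
  have : Real.sqrt π ^ 2 / Real.Gamma ((2 : ℕ) / 2 + 1) = π := by
    have : ((2 : ℕ) : ℝ) / 2 + 1 = 2 := by norm_num
    rw [this, Real.Gamma_two, Real.sq_sqrt Real.pi_nonneg, div_one]
  rw [this, ← ENNReal.ofReal_pow hr, ← ENNReal.ofReal_mul (by positivity), mul_comm]

/-- Pointwise lower bound for the heat convolution just outside the disc. -/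
lemma conv_lb (s : ℝ) (hs0 : 0 < s) (hs1 : s ≤ 1) (x : Plane)
    (hx1 : 1 < ‖x‖) (hx2 : ‖x‖ ≤ 1 + Real.sqrt s) :
    Real.exp (-(9/4)) / 4 ≤ ∫ y : Plane, heatKernel s (x - y) * discInd y := by
  set r := Real.sqrt s with hr_def
  have hr0 : 0 < r := Real.sqrt_pos.mpr hs0
  have hr1 : r ≤ 1 := by
    rw [hr_def, show (1:ℝ) = Real.sqrt 1 by simp]
    exact Real.sqrt_le_sqrt hs1
  have hrs : r ^ 2 = s := Real.sq_sqrt hs0.le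
  have hx0 : (0:ℝ) < ‖x‖ := lt_trans one_pos hx1
  set z : Plane := ((1 - r) / ‖x‖) • x with hz_def
  have hz_norm : ‖z‖ = 1 - r := by
    rw [hz_def, norm_smul, Real.norm_eq_abs, abs_of_nonneg (div_nonneg (by linarith) hx0.le),
      div_mul_cancel₀ _ hx0.ne']
  -- the small ball is inside the unit disc
  have hsub : Metric.closedBall z r ⊆ Metric.closedBall (0 : Plane) 1 := by
    intro y hy
    rw [Metric.mem_closedBall, dist_zero_right]
    calc ‖y‖ ≤ ‖y - z‖ + ‖z‖ := by
          simpa using norm_add_le (y - z) z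
      _ ≤ r + (1 - r) := by
          rw [Metric.mem_closedBall, dist_eq_norm] at hy
          exact add_le_add hy (le_of_eq hz_norm)
      _ = 1 := by ring
  have hxz : ‖x - z‖ = ‖x‖ - (1 - r) := by
    have : x - z = (1 - (1 - r) / ‖x‖) • x := by
      rw [hz_def, sub_smul, one_smul]
    rw [this, norm_smul, Real.norm_eq_abs]
    have h1 : (1 - r) / ‖x‖ ≤ 1 := by
      rw [div_le_one hx0]; linarith
    rw [abs_of_nonneg (by linarith)]
    field_simp
  -- on the small ball, the kernel is bounded below
  have hker : ∀ y ∈ Metric.closedBall z r,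
      Real.exp (-(9/4)) / (4 * π * s) ≤ heatKernel s (x - y) := by
    intro y hy
    rw [Metric.mem_closedBall, dist_eq_norm] at hy
    have hdist : ‖x - y‖ ≤ 3 * r := by
      calc ‖x - y‖ ≤ ‖x - z‖ + ‖z - y‖ := by
            simpa using norm_add_le (x - z) (z - y)
        _ ≤ (‖x‖ - (1 - r)) + r := by
            rw [hxz]; gcongr; rwa [norm_sub_rev]
        _ ≤ 3 * r := by linarith
    have hsq : ‖x - y‖ ^ 2 ≤ 9 * s := by
      have := sq_le_sq' (by nlinarith [norm_nonneg (x - y)]) hdist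
      nlinarith [this]
    have hexp : Real.exp (-(9/4)) ≤ Real.exp (-‖x - y‖ ^ 2 / (4 * s)) := by
      apply Real.exp_le_exp.mpr
      rw [neg_div, neg_le_neg_iff]
      rw [div_le_iff₀ (by positivity)]
      linarith
    unfold heatKernel
    rw [div_eq_mul_one_div, mul_comm]
    exact mul_le_mul (le_refl _) hexp (Real.exp_pos _).le (by positivity)
  -- integrability
  have hg_cont : Continuous (fun y : Plane => heatKernel s (x - y)) := by
    unfold heatKernel
    continuity
  have hInt : Integrable (fun y : Plane => heatKernel s (x - y) * discInd y) := by
    have : (fun y : Plane => heatKernel s (x - y) * discInd y)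
        = (Metric.closedBall (0 : Plane) 1).indicator (fun y => heatKernel s (x - y)) := by
      ext y
      unfold discInd
      by_cases hy : y ∈ Metric.closedBall (0 : Plane) 1
      · simp [hy]
      · simp [hy]
    rw [this]
    exact (hg_cont.continuousOn.integrableOn_compact
      (isCompact_closedBall _ _)).integrable_indicator measurableSet_closedBall
  have hnn : 0 ≤ᵐ[volume] fun y : Plane => heatKernel s (x - y) * discInd y := by
    apply Filter.Eventually.of_forall
    intro y
    unfold heatKernel discInd
    by_cases hy : y ∈ Metric.closedBall (0 : Plane) 1
    · simp only [Set.indicator_of_mem hy, Pi.one_apply, mul_one]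
      positivity
    · simp [Set.indicator_of_notMem hy]
  -- chain of inequalities
  have step1 : ∫ y in Metric.closedBall z r, heatKernel s (x - y) * discInd y
      ≤ ∫ y : Plane, heatKernel s (x - y) * discInd y :=
    setIntegral_le_integral hInt hnn
  have step2 : ∫ y in Metric.closedBall z r, heatKernel s (x - y) * discInd y
      = ∫ y in Metric.closedBall z r, heatKernel s (x - y) := by
    apply setIntegral_congr_fun measurableSet_closedBall
    intro y hy
    have : y ∈ Metric.closedBall (0 : Plane) 1 := hsub hy
    unfold discInd
    simp [Set.indicator_of_mem this]
  have step3 : ∫ y in Metric.closedBall z r, (Real.exp (-(9/4)) / (4 * π * s))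
      ≤ ∫ y in Metric.closedBall z r, heatKernel s (x - y) := by
    apply setIntegral_mono_on
    · exact integrableOn_const (by
        rw [volume_closedBall_plane z r hr0.le]; exact ENNReal.ofReal_ne_top)
    · exact hg_cont.continuousOn.integrableOn_compact (isCompact_closedBall _ _)
    · exact measurableSet_closedBall
    · exact hker
  have step4 : ∫ y in Metric.closedBall z r, (Real.exp (-(9/4)) / (4 * π * s))
      = Real.exp (-(9/4)) / 4 := by
    rw [setIntegral_const, measureReal_def, volume_closedBall_plane z r hr0.le, smul_eq_mul,
      ENNReal.toReal_ofReal (by positivity), hrs]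
    field_simp
  linarith
/-- Optimality (lower bound): there is `C₁ > 0`, independent of `μ` and `t` (but possibly
depending on `p`), such that for all `μ, t > 0` with `μt ≤ 1`,
`‖W(t,·)‖_{L^p(ℝ²)} ≥ C₁ (μt)^{1/(2p)}`. -/
theorem stmt0 (p : ℝ) (hp : 2 ≤ p) :
    ∃ C₁ > (0 : ℝ), ∀ μ t : ℝ, 0 < μ → 0 < t → μ * t ≤ 1 →
      ENNReal.ofReal (C₁ * (μ * t) ^ (1 / (2 * p))) ≤
        eLpNorm (Wfun μ t) (ENNReal.ofReal p) volume := by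
  have hc0pos : 0 < Real.exp (-(9/4)) / 4 := by positivity
  set c₀ : ℝ := Real.exp (-(9/4)) / 4 with hc₀
  refine ⟨c₀, hc0pos, ?_⟩
  intro μ t hμ ht hμt
  have hp0 : 0 < p := by linarith
  set s := μ * t with hs_def
  have hs0 : 0 < s := mul_pos hμ ht
  set r := Real.sqrt s with hr_def
  have hr0 : 0 < r := Real.sqrt_pos.mpr hs0
  set A : Set Plane := Metric.closedBall 0 (1 + r) \ Metric.closedBall 0 1 with hA
  have hAmeas : MeasurableSet A :=
    measurableSet_closedBall.diff measurableSet_closedBall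
  -- W ≥ c₀ on A
  have hW : ∀ x ∈ A, c₀ ≤ Wfun μ t x := by
    intro x hx
    obtain ⟨hx1, hx2⟩ := hx
    rw [Metric.mem_closedBall, dist_zero_right] at hx1
    have hx2' : 1 < ‖x‖ := by
      by_contra h
      exact hx2 (by rw [Metric.mem_closedBall, dist_zero_right]; linarith)
    have hind : discInd x = 0 := by
      unfold discInd
      rw [Set.indicator_of_notMem hx2]
    unfold Wfun
    rw [hind, sub_zero]
    exact conv_lb s hs0 hμt x hx2' hx1
  -- volume lower bound for A
  have hvolA : ENNReal.ofReal r ≤ volume A := by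
    have h1 : volume A = volume (Metric.closedBall (0:Plane) (1+r)) -
        volume (Metric.closedBall (0:Plane) 1) := by
      rw [hA]
      exact measure_diff (Metric.closedBall_subset_closedBall (by linarith))
        measurableSet_closedBall.nullMeasurableSet
        (by rw [volume_closedBall_plane _ _ one_pos.le]; exact ENNReal.ofReal_ne_top)
    rw [h1, volume_closedBall_plane _ _ (by linarith), volume_closedBall_plane _ _ one_pos.le,
      ← ENNReal.ofReal_sub _ (by positivity)]
    apply ENNReal.ofReal_le_ofReal
    have h3 : (3:ℝ) < π := Real.pi_gt_three
    nlinarith [mul_pos (sub_pos.mpr h3) hr0, mul_nonneg Real.pi_pos.le (sq_nonneg r), hr0.le]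
  have hq0 : (ENNReal.ofReal p) ≠ 0 := by
    simp only [ne_eq, ENNReal.ofReal_eq_zero, not_le]; linarith
  have hqt : (ENNReal.ofReal p) ≠ ⊤ := ENNReal.ofReal_ne_top
  rw [eLpNorm_eq_lintegral_rpow_enorm_toReal hq0 hqt, ENNReal.toReal_ofReal hp0.le]
  simp only [enorm_eq_nnnorm]
  have key : (ENNReal.ofReal c₀) ^ p * ENNReal.ofReal r
      ≤ ∫⁻ x, (‖Wfun μ t x‖₊ : ENNReal) ^ p := by
    calc (ENNReal.ofReal c₀) ^ p * ENNReal.ofReal r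
        ≤ (ENNReal.ofReal c₀) ^ p * volume A := mul_le_mul_right hvolA _
      _ = ∫⁻ _ in A, (ENNReal.ofReal c₀) ^ p := by rw [setLIntegral_const]
      _ ≤ ∫⁻ x in A, (‖Wfun μ t x‖₊ : ENNReal) ^ p := by
          apply lintegral_mono_ae
          rw [ae_restrict_iff' hAmeas]
          apply Filter.Eventually.of_forall
          intro x hx
          have h1 : c₀ ≤ Wfun μ t x := hW x hx
          have h2 : ENNReal.ofReal c₀ ≤ (‖Wfun μ t x‖₊ : ENNReal) := by
            rw [← enorm_eq_nnnorm, ← ofReal_norm]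
            apply ENNReal.ofReal_le_ofReal
            calc c₀ ≤ Wfun μ t x := h1
              _ ≤ ‖Wfun μ t x‖ := le_abs_self _
          exact ENNReal.rpow_le_rpow h2 hp0.le
      _ ≤ ∫⁻ x, (‖Wfun μ t x‖₊ : ENNReal) ^ p := setLIntegral_le_lintegral _ _
  have final := ENNReal.rpow_le_rpow key (by positivity : (0:ℝ) ≤ 1/p)
  refine le_trans (le_of_eq ?_) final
  have hrp : r ^ (1/p) = s ^ (1/(2*p)) := by
    rw [hr_def, Real.sqrt_eq_rpow, ← Real.rpow_mul hs0.le]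
    congr 1
    field_simp
  rw [ENNReal.mul_rpow_of_nonneg _ _ (by positivity), ← ENNReal.rpow_mul,
    mul_one_div_cancel hp0.ne', ENNReal.rpow_one,
    ENNReal.ofReal_rpow_of_nonneg hr0.le (by positivity), hrp,
    ← ENNReal.ofReal_mul hc0pos.le]
end
end

section
/- Gaussian annulus lower bound: for all R ≥ 1 and x ∈ ℝ² with R − 1 ≤ |x| ≤ R, the integral ∫_{|z| ≥ R} e^{−|x−z|²/4} dz is bounded below by a positive absolute constant independent of R and x. -/
open MeasureTheory Real

noncomputable section

/-- Gaussian annulus lower bound: for all `R ≥ 1` and `x ∈ ℝ²` with `R − 1 ≤ |x| ≤ R`,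
`∫_{|z| ≥ R} e^{−|x−z|²/4} dz` is bounded below by a positive absolute constant
independent of `R` and `x`. -/
theorem stmt17 :
    ∃ c > (0 : ℝ), ∀ R : ℝ, 1 ≤ R → ∀ x : Plane, R - 1 ≤ ‖x‖ → ‖x‖ ≤ R →
      c ≤ ∫ z in {z : Plane | R ≤ ‖z‖}, Real.exp (-‖x - z‖ ^ 2 / 4) := by
  refine ⟨Real.exp (-4) * (volume (Metric.ball (0 : Plane) 1)).toReal, ?_, ?_⟩
  · apply mul_pos (Real.exp_pos _)
    exact ENNReal.toReal_pos (Metric.measure_ball_pos volume (0:Plane) one_pos).ne'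
      measure_ball_lt_top.ne
  intro R hR x hx1 hx2
  -- a point of norm R + 2 within distance 3 of x
  obtain ⟨y, hy, hxy⟩ : ∃ y : Plane, ‖y‖ = R + 2 ∧ ‖x - y‖ ≤ 3 := by
    rcases eq_or_ne x 0 with h0 | h0
    · refine ⟨(R + 2) • EuclideanSpace.single 0 1, ?_, ?_⟩
      · rw [norm_smul, EuclideanSpace.norm_single]
        simp [abs_of_nonneg (by linarith : (0:ℝ) ≤ R + 2)]
      · have hR1 : R ≤ 1 := by
          have := hx1; rw [h0, norm_zero] at this; linarith
        rw [h0, zero_sub, norm_neg, norm_smul, EuclideanSpace.norm_single]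
        simp [abs_of_nonneg (by linarith : (0:ℝ) ≤ R + 2)]
        linarith
    · have hxp : (0:ℝ) < ‖x‖ := norm_pos_iff.mpr h0
      refine ⟨((R + 2) / ‖x‖) • x, ?_, ?_⟩
      · rw [norm_smul, Real.norm_eq_abs, abs_of_pos (by positivity), div_mul_cancel₀]
        exact hxp.ne'
      · have : x - ((R + 2) / ‖x‖) • x = (1 - (R + 2) / ‖x‖) • x := by
          rw [sub_smul, one_smul]
        rw [this, norm_smul, Real.norm_eq_abs]
        have h1 : (R + 2) / ‖x‖ ≥ 1 := by
          rw [ge_iff_le, le_div_iff₀ hxp]; linarith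
        rw [abs_of_nonpos (by linarith), neg_sub, sub_mul, div_mul_cancel₀ _ hxp.ne',
          one_mul]
        linarith
  -- integrability of the Gaussian
  have hg : Integrable (fun v : Plane => Real.exp (-‖v‖ ^ 2 / 4)) := by
    have h := (GaussianFourier.integrable_cexp_neg_mul_sq_norm_add (V := Plane) (b := (1/4 : ℂ))
      (by norm_num) 0 0).re
    refine h.congr (Filter.Eventually.of_forall fun v => ?_)
    have : (-(1/4 : ℂ) * (‖v‖:ℂ) ^ 2 + 0 * ((inner ℝ (0 : Plane) v : ℝ) : ℂ)) =
        ((-‖v‖ ^ 2 / 4 : ℝ) : ℂ) := by push_cast; ring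
    simp only [RCLike.inner_apply, conj_trivial] at this ⊢
    rw [this, ← Complex.ofReal_exp]; simp
    rw [show (-(‖v‖:ℂ)^2/4) = ((-‖v‖^2/4 : ℝ):ℂ) by push_cast; ring,
      Complex.exp_ofReal_re]
  have hf : Integrable (fun z : Plane => Real.exp (-‖x - z‖ ^ 2 / 4)) :=
    hg.comp_sub_left x
  have hball : Metric.ball y 1 ⊆ {z : Plane | R ≤ ‖z‖} := by
    intro z hz
    have : ‖y - z‖ < 1 := by
      rw [← dist_eq_norm]; exact Metric.mem_ball'.mp hz
    have : ‖y‖ - ‖z‖ < 1 := lt_of_le_of_lt (by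
      have := norm_sub_norm_le y z; linarith) this
    simp only [Set.mem_setOf_eq]; rw [hy] at this; linarith
  calc Real.exp (-4) * (volume (Metric.ball (0 : Plane) 1)).toReal
      = Real.exp (-4) * (volume (Metric.ball y 1)).toReal := by
        rw [Measure.addHaar_ball_center volume y]
    _ ≤ ∫ z in Metric.ball y 1, Real.exp (-‖x - z‖ ^ 2 / 4) := by
        refine Eq.trans_le ?_ (setIntegral_ge_of_const_le (c := Real.exp (-4)) measurableSet_ball
          measure_ball_lt_top.ne (fun z hz => ?_) hf.integrableOn)
        · rw [smul_eq_mul, mul_comm]; rfl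
        apply Real.exp_le_exp.mpr
        have h1 : ‖y - z‖ < 1 := by
          rw [← dist_eq_norm]; exact Metric.mem_ball'.mp hz
        have h2 : ‖x - z‖ ≤ ‖x - y‖ + ‖y - z‖ := norm_sub_le_norm_sub_add_norm_sub x y z
        have h3 : ‖x - z‖ ≤ 4 := by linarith
        have h4 : ‖x - z‖ ^ 2 ≤ 16 := by nlinarith [norm_nonneg (x - z)]
        linarith
    _ ≤ ∫ z in {z : Plane | R ≤ ‖z‖}, Real.exp (-‖x - z‖ ^ 2 / 4) := by
        refine setIntegral_mono_set hf.integrableOn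
          (Filter.Eventually.of_forall fun z => (Real.exp_pos _).le)
          (HasSubset.Subset.eventuallyLE hball)
end
end
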